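/- If (x*, y*) is a local minimizer of the relaxed MPCaC problem, then (x*, y*) is an AW-stationary point of this problem. -/

import Mathlib

open Filter Topology
open scoped Classical

noncomputable section

/-- `ℝⁿ` as a Euclidean space. -/
abbrev E (n : ℕ) : Type := EuclideanSpace ℝ (Fin n)

/-- The constraint function `θ(y) = n − α − eᵀ y` of the relaxed MPCaC problem. -/
def theta {n : ℕ} (α : ℕ) (y : E n) : ℝ := (n : ℝ) - (α : ℝ) - ∑ i, y i

/-- Feasibility for the relaxed MPCaC problem:
`g(x) ≤ 0, h(x) = 0, θ(y) ≤ 0, xᵢ yᵢ = 0, 0 ≤ yᵢ ≤ 1`. -/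
def relFeas {n m p : ℕ} (g : E n → Fin m → ℝ) (h : E n → Fin p → ℝ) (α : ℕ)
    (x y : E n) : Prop :=
  (∀ i, g x i ≤ 0) ∧ (∀ j, h x j = 0) ∧ theta α y ≤ 0 ∧
  (∀ i, x i * y i = 0) ∧ (∀ i, 0 ≤ y i ∧ y i ≤ 1)

/-- `∇f(x) + Σᵢ λᵍᵢ ∇gᵢ(x) + Σⱼ λʰⱼ ∇hⱼ(x)`. -/
def gradLx {n m p : ℕ} (f : E n → ℝ) (g : E n → Fin m → ℝ) (h : E n → Fin p → ℝ)
    (x : E n) (lg : Fin m → ℝ) (lh : Fin p → ℝ) : E n :=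
  gradient f x + ∑ i, lg i • gradient (fun z => g z i) x
    + ∑ j, lh j • gradient (fun z => h z j) x

/-- `i ∈ I_{0+}(x̄,ȳ) ∪ I_{01}(x̄,ȳ)`, i.e. `x̄ᵢ = 0` and (`0 < ȳᵢ < 1` or `ȳᵢ = 1`). -/
def inI0p01 {n : ℕ} (xb yb : E n) (i : Fin n) : Prop :=
  xb i = 0 ∧ ((0 < yb i ∧ yb i < 1) ∨ yb i = 1)

/-- Admissibility of the index set `I`: `I_{0+} ∪ I_{01} ⊆ I ⊆ I_0`. -/
def idxOK {n : ℕ} (xb yb : E n) (I : Finset (Fin n)) : Prop :=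
  (∀ i, inI0p01 xb yb i → i ∈ I) ∧ (∀ i ∈ I, xb i = 0)

/-- Feasibility for the tightened problem `TNLP_I(x̄,ȳ)`:
`g(x) ≤ 0, h(x) = 0, θ(y) ≤ 0, xᵢ = 0 (i ∈ I), −yᵢ ≤ 0 (i ∈ I_{0+} ∪ I_{01}),`
`−yᵢ = 0 (i ∈ I_{00} ∪ I_{±0}), y − e ≤ 0`. Note `I_{00} ∪ I_{±0} = {i | ȳᵢ = 0}`. -/
def tnlpFeas {n m p : ℕ} (g : E n → Fin m → ℝ) (h : E n → Fin p → ℝ) (α : ℕ)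
    (xb yb : E n) (I : Finset (Fin n)) (x y : E n) : Prop :=
  (∀ i, g x i ≤ 0) ∧ (∀ j, h x j = 0) ∧ theta α y ≤ 0 ∧
  (∀ i ∈ I, x i = 0) ∧
  (∀ i, inI0p01 xb yb i → -(y i) ≤ 0) ∧
  (∀ i, yb i = 0 → -(y i) = 0) ∧
  (∀ i, y i - 1 ≤ 0)

/-- `W_I`-stationarity for the relaxed MPCaC problem (Definition 2.9 of the paper). -/
def WStat {n m p : ℕ} (f : E n → ℝ) (g : E n → Fin m → ℝ) (h : E n → Fin p → ℝ)
    (α : ℕ) (xb yb : E n) (I : Finset (Fin n)) : Prop :=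
  ∃ (lg : Fin m → ℝ) (lh : Fin p → ℝ) (lθ : ℝ) (lG : Fin n → ℝ) (lH lH' : Fin n → ℝ),
    (∀ i, 0 ≤ lg i) ∧ 0 ≤ lθ ∧ (∀ i, 0 ≤ lH' i) ∧
    gradLx f g h xb lg lh + ∑ i ∈ I, lG i • EuclideanSpace.single i 1 = 0 ∧
    (∀ i, -lθ - lH i + lH' i = 0) ∧
    (∑ i, lg i * g xb i) = 0 ∧
    lθ * theta α yb = 0 ∧
    (∀ i, inI0p01 xb yb i → lH i = 0) ∧
    (∑ i, lH' i * (yb i - 1)) = 0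

/-- Approximate weak (`AW`) stationarity for the relaxed MPCaC problem
(Definition 3.1 of the paper). -/
def AWStat {n m p : ℕ} (f : E n → ℝ) (g : E n → Fin m → ℝ) (h : E n → Fin p → ℝ)
    (α : ℕ) (xb yb : E n) : Prop :=
  ∃ (x y : ℕ → E n) (lg : ℕ → Fin m → ℝ) (lh : ℕ → Fin p → ℝ) (lθ : ℕ → ℝ)
    (lG : ℕ → E n) (lH lH' : ℕ → Fin n → ℝ),
    (∀ k i, 0 ≤ lg k i) ∧ (∀ k, 0 ≤ lθ k) ∧ (∀ k i, 0 ≤ lH' k i) ∧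
    Tendsto x atTop (𝓝 xb) ∧ Tendsto y atTop (𝓝 yb) ∧
    Tendsto (fun k => gradLx f g h (x k) (lg k) (lh k) + lG k) atTop (𝓝 0) ∧
    Tendsto (fun k i => -(lθ k) - lH k i + lH' k i) atTop (𝓝 (0 : Fin n → ℝ)) ∧
    (∀ i, Tendsto (fun k => min (-(g (x k) i)) (lg k i)) atTop (𝓝 0)) ∧
    Tendsto (fun k => min (-(theta α (y k))) (lθ k)) atTop (𝓝 0) ∧
    (∀ i, Tendsto (fun k => min |x k i| |lG k i|) atTop (𝓝 0)) ∧
    (∀ i, Tendsto (fun k => min (y k i) |lH k i|) atTop (𝓝 0)) ∧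
    (∀ i, Tendsto (fun k => min (1 - y k i) (lH' k i)) atTop (𝓝 0))

section AuxPenalty
open InnerProductSpace

lemma hasDerivAt_maxsq (t : ℝ) : HasDerivAt (fun s : ℝ => max s 0 ^ 2) (2 * max t 0) t := by
  rcases lt_trichotomy t 0 with ht | ht | ht
  · have h0 : HasDerivAt (fun _ : ℝ => (0:ℝ)) (2 * max t 0) t := by
      simpa [max_eq_right ht.le] using hasDerivAt_const t (0:ℝ)
    refine h0.congr_of_eventuallyEq ?_
    filter_upwards [eventually_lt_nhds ht] with s hs
    simp [max_eq_right hs.le]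
  · subst ht
    have : HasDerivAt (fun s : ℝ => max s 0 ^ 2) 0 0 := by
      rw [hasDerivAt_iff_isLittleO]
      simp only [sub_zero, smul_zero, max_self, zero_pow, ne_eq, OfNat.ofNat_ne_zero,
        not_false_iff, sub_zero]
      rw [Asymptotics.isLittleO_iff]
      intro c hc
      filter_upwards [Metric.eventually_nhds_iff.2 ⟨c, hc, fun {y} hy => hy⟩] with s hs
      have h1 : |max s 0| ≤ |s| := by
        rcases le_total s 0 with h | h
        · simp [max_eq_right h]
        · simp [max_eq_left h]
      have h2 : max s 0 ^ 2 ≤ |s| ^ 2 := by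
        rw [← sq_abs]
        exact pow_le_pow_left₀ (abs_nonneg _) h1 2
      have hsc : |s| ≤ c := by
        simpa [Real.dist_eq] using le_of_lt hs
      have : ‖max s 0 ^ 2‖ = max s 0 ^ 2 := abs_of_nonneg (sq_nonneg _)
      calc ‖max s 0 ^ 2‖ = max s 0 ^ 2 := this
        _ ≤ |s| ^ 2 := h2
        _ = |s| * |s| := by ring
        _ ≤ c * |s| := mul_le_mul_of_nonneg_right hsc (abs_nonneg _)
        _ = c * ‖s‖ := by simp
    simpa using this
  · have h0 : HasDerivAt (fun s : ℝ => s ^ 2) (2 * max t 0) t := by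
      simpa [max_eq_left ht.le, mul_comm] using hasDerivAt_pow 2 t
    refine h0.congr_of_eventuallyEq ?_
    filter_upwards [eventually_gt_nhds ht] with s hs
    simp [max_eq_left hs.le]

lemma toDual_single {n : ℕ} (i : Fin n) :
    toDual ℝ (E n) (EuclideanSpace.single i (1:ℝ)) = EuclideanSpace.proj i := by
  ext v
  simp [toDual_apply_apply, EuclideanSpace.inner_single_left]

lemma akkt {n m p : ℕ} (f : E n → ℝ) (g : E n → Fin m → ℝ) (h : E n → Fin p → ℝ)
    (hf : ContDiff ℝ 1 f) (hg : ∀ i, ContDiff ℝ 1 fun x => g x i)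
    (hh : ∀ j, ContDiff ℝ 1 fun x => h x j)
    (J : Finset (Fin n)) (xs : E n) (r : ℝ) (hr : 0 < r)
    (hgxs : ∀ i, g xs i ≤ 0) (hhxs : ∀ j, h xs j = 0) (hJxs : ∀ i ∈ J, xs i = 0)
    (hmin : ∀ x : E n, (∀ i, g x i ≤ 0) → (∀ j, h x j = 0) → (∀ i ∈ J, x i = 0) →
      ‖x - xs‖ ≤ r → f xs ≤ f x) :
    ∃ (x : ℕ → E n) (lg : ℕ → Fin m → ℝ) (lh : ℕ → Fin p → ℝ),
      (∀ k i, 0 ≤ lg k i) ∧ Tendsto x atTop (𝓝 xs) ∧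
      (∀ i, Tendsto (fun k => min (-(g (x k) i)) (lg k i)) atTop (𝓝 0)) ∧
      (∀ i, Tendsto (fun k => min |x k i| |gradLx f g h (x k) (lg k) (lh k) i|)
        atTop (𝓝 0)) := by
  set ρ : ℕ → ℝ := fun k => (k : ℝ) + 1 with hρdef
  have hρpos : ∀ k, 0 < ρ k := fun k => by positivity
  set P : E n → ℝ := fun z =>
    (∑ i, max (g z i) 0 ^ 2) + (∑ j, (h z j) ^ 2) + ∑ i ∈ J, (z i) ^ 2 with hPdef
  set Q : E n → ℝ := fun z => ∑ i, (z i - xs i) ^ 2 with hQdef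
  set F : ℕ → E n → ℝ := fun k z => f z + ρ k * P z + Q z with hFdef
  -- continuity facts
  have hcoord : ∀ i : Fin n, Continuous fun z : E n => z i :=
    fun i => (EuclideanSpace.proj (𝕜 := ℝ) i).continuous
  have hPcont : Continuous P := by
    refine ((Continuous.add ?_ ?_).add ?_)
    · exact continuous_finset_sum _ fun i _ => ((hg i).continuous.max continuous_const).pow 2
    · exact continuous_finset_sum _ fun j _ => ((hh j).continuous).pow 2
    · exact continuous_finset_sum _ fun i _ => (hcoord i).pow 2
  have hQcont : Continuous Q :=
    continuous_finset_sum _ fun i _ => ((hcoord i).sub continuous_const).pow 2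
  have hFcont : ∀ k, Continuous (F k) :=
    fun k => (hf.continuous.add (continuous_const.mul hPcont)).add hQcont
  have hP0 : ∀ z, 0 ≤ P z := by
    intro z
    have := Finset.sum_nonneg (fun i (_ : i ∈ Finset.univ) => sq_nonneg (max (g z i) 0))
    have := Finset.sum_nonneg (fun j (_ : j ∈ Finset.univ) => sq_nonneg (h z j))
    have := Finset.sum_nonneg (fun i (_ : i ∈ J) => sq_nonneg (z i))
    positivity
  have hQ0 : ∀ z, 0 ≤ Q z :=
    fun z => Finset.sum_nonneg fun i _ => sq_nonneg _
  -- the minimizers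
  set B : Set (E n) := Metric.closedBall xs r with hBdef
  have hxsB : xs ∈ B := Metric.mem_closedBall_self hr.le
  have hBc : IsCompact B := isCompact_closedBall xs r
  have hBne : B.Nonempty := ⟨xs, hxsB⟩
  choose x hxB hxmin using fun k => hBc.exists_isMinOn hBne (hFcont k).continuousOn
  -- lower bound for f on B
  obtain ⟨xm, hxmB, hfm⟩ := hBc.exists_isMinOn hBne hf.continuous.continuousOn
  set c : ℝ := f xm with hcdef
  have hclef : ∀ z ∈ B, c ≤ f z := fun z hz => hfm hz
  -- value at xs
  have hPxs : P xs = 0 := by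
    have h1 : ∀ i : Fin m, max (g xs i) 0 ^ 2 = 0 := fun i => by
      simp [max_eq_right (hgxs i)]
    have h2 : ∀ j : Fin p, (h xs j) ^ 2 = 0 := fun j => by simp [hhxs j]
    have h3 : ∑ i ∈ J, (xs i) ^ 2 = 0 :=
      Finset.sum_eq_zero fun i hi => by simp [hJxs i hi]
    simp [hPdef, h1, h2, h3]
  have hQxs : Q xs = 0 := by simp [hQdef]
  have hFxs : ∀ k, F k xs = f xs := fun k => by simp [hFdef, hPxs, hQxs]
  have hkey : ∀ k, f (x k) + ρ k * P (x k) + Q (x k) ≤ f xs := by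
    intro k
    have h0 : F k (x k) ≤ F k xs := isMinOn_iff.1 (hxmin k) xs hxsB
    rw [hFxs k] at h0
    exact h0
  have hfQ : ∀ k, f (x k) + Q (x k) ≤ f xs := by
    intro k
    have h1 := hkey k
    nlinarith [mul_nonneg (hρpos k).le (hP0 (x k))]
  have hPbound : ∀ k, P (x k) ≤ (f xs - c) / ρ k := by
    intro k
    rw [le_div_iff₀ (hρpos k)]
    have h1 := hkey k
    have h2 := hclef (x k) (hxB k)
    have h3 := hQ0 (x k)
    nlinarith
  have hρtop : Tendsto ρ atTop atTop :=
    tendsto_atTop_add_const_right _ 1 tendsto_natCast_atTop_atTop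
  have hPlim : Tendsto (fun k => P (x k)) atTop (𝓝 0) :=
    squeeze_zero (fun k => hP0 _) hPbound (Tendsto.div_atTop tendsto_const_nhds hρtop)
  -- convergence x → xs
  have hxtend : Tendsto x atTop (𝓝 xs) := by
    refine tendsto_of_subseq_tendsto fun ns hns => ?_
    obtain ⟨xh, hxhB, ms, hms, hmt⟩ := hBc.tendsto_subseq (fun j => hxB (ns j))
    have hsub : Tendsto (fun j => ns (ms j)) atTop atTop := hns.comp hms.tendsto_atTop
    have hPxh : P xh = 0 := by
      have t1 : Tendsto (fun j => P (x (ns (ms j)))) atTop (𝓝 (P xh)) :=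
        (hPcont.tendsto xh).comp hmt
      have t2 : Tendsto (fun j => P (x (ns (ms j)))) atTop (𝓝 0) := hPlim.comp hsub
      exact tendsto_nhds_unique t1 t2
    -- feasibility of xh
    have hsplit : (∑ i, max (g xh i) 0 ^ 2) = 0 ∧ (∑ j, (h xh j) ^ 2) = 0 ∧
        (∑ i ∈ J, (xh i) ^ 2) = 0 := by
      have s1 : (0:ℝ) ≤ ∑ i, max (g xh i) 0 ^ 2 :=
        Finset.sum_nonneg fun i _ => sq_nonneg _
      have s2 : (0:ℝ) ≤ ∑ j, (h xh j) ^ 2 := Finset.sum_nonneg fun j _ => sq_nonneg _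
      have s3 : (0:ℝ) ≤ ∑ i ∈ J, (xh i) ^ 2 := Finset.sum_nonneg fun i _ => sq_nonneg _
      have := hPxh
      simp only [hPdef] at this
      constructor
      · nlinarith
      constructor
      · nlinarith
      · nlinarith
    have hgf : ∀ i, g xh i ≤ 0 := by
      intro i
      have := (Finset.sum_eq_zero_iff_of_nonneg
        (fun i _ => sq_nonneg (max (g xh i) 0))).1 hsplit.1 i (Finset.mem_univ i)
      have hm : max (g xh i) 0 = 0 := by
        have := sq_eq_zero_iff.1 this
        exact this
      calc g xh i ≤ max (g xh i) 0 := le_max_left _ _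
        _ = 0 := hm
    have hhf : ∀ j, h xh j = 0 := by
      intro j
      have := (Finset.sum_eq_zero_iff_of_nonneg
        (fun j _ => sq_nonneg (h xh j))).1 hsplit.2.1 j (Finset.mem_univ j)
      exact sq_eq_zero_iff.1 this
    have hJf : ∀ i ∈ J, xh i = 0 := by
      intro i hi
      have := (Finset.sum_eq_zero_iff_of_nonneg
        (fun i _ => sq_nonneg (xh i))).1 hsplit.2.2 i hi
      exact sq_eq_zero_iff.1 this
    have hball : ‖xh - xs‖ ≤ r := by
      have := hxhB
      rw [hBdef, Metric.mem_closedBall, dist_eq_norm] at this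
      exact this
    have hfle : f xs ≤ f xh := hmin xh hgf hhf hJf hball
    have hle2 : f xh + Q xh ≤ f xs := by
      have t1 : Tendsto (fun j => f (x (ns (ms j))) + Q (x (ns (ms j)))) atTop
          (𝓝 (f xh + Q xh)) := ((hf.continuous.add hQcont).tendsto xh).comp hmt
      exact le_of_tendsto t1 (Eventually.of_forall fun j => hfQ _)
    have hQxh : Q xh = 0 := le_antisymm (by linarith) (hQ0 xh)
    have hxh : xh = xs := by
      have hnorm : ‖xh - xs‖ = 0 := by
        have : ∑ i, ‖(xh - xs) i‖ ^ 2 = 0 := by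
          rw [← hQxh]
          refine Finset.sum_congr rfl fun i _ => ?_
          have : (xh - xs) i = xh i - xs i := rfl
          rw [this, Real.norm_eq_abs, sq_abs]
        rw [EuclideanSpace.norm_eq]
        simpa [Real.sqrt_eq_zero'] using le_of_eq this
      have := norm_eq_zero.1 hnorm
      exact sub_eq_zero.1 this
    exact ⟨ms, hxh ▸ hmt⟩
  -- multipliers
  set lg : ℕ → Fin m → ℝ := fun k i => ρ k * (2 * max (g (x k) i) 0) with hlgdef
  set lh : ℕ → Fin p → ℝ := fun k j => ρ k * (2 * h (x k) j) with hlhdef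
  have hlg0 : ∀ k i, 0 ≤ lg k i := fun k i =>
    mul_nonneg (hρpos k).le (mul_nonneg (by norm_num) (le_max_right _ _))
  -- a helper : gradient components via fderiv
  have hgradapp : ∀ (q : E n → ℝ) (z : E n) (i : Fin n),
      gradient q z i = fderiv ℝ q z (EuclideanSpace.single i 1) := by
    intro q z i
    have h1 : fderiv ℝ q z = toDual ℝ (E n) (gradient q z) := by
      rw [gradient, LinearIsometryEquiv.apply_symm_apply]
    rw [h1]
    simp only [toDual_apply_apply, EuclideanSpace.inner_single_right]
    simp
  -- stationarity of the penalized problem at interior points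
  have hstat : ∀ k, x k ∈ Metric.ball xs r → ∀ i : Fin n,
      gradLx f g h (x k) (lg k) (lh k) i =
        -((if i ∈ J then ρ k * (2 * x k i) else 0) + 2 * (x k i - xs i)) := by
    intro k hk i
    set z : E n := x k with hzdef
    have hfd : HasFDerivAt f (fderiv ℝ f z) z :=
      ((hf.differentiable one_ne_zero) z).hasFDerivAt
    have hgd : ∀ i', HasFDerivAt (fun w => g w i') (fderiv ℝ (fun w => g w i') z) z :=
      fun i' => (((hg i').differentiable one_ne_zero) z).hasFDerivAt
    have hhd : ∀ j, HasFDerivAt (fun w => h w j) (fderiv ℝ (fun w => h w j) z) z :=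
      fun j => (((hh j).differentiable one_ne_zero) z).hasFDerivAt
    set S1 : E n →L[ℝ] ℝ :=
      ∑ i', (2 * max (g z i') 0) • fderiv ℝ (fun w => g w i') z with hS1def
    set S2 : E n →L[ℝ] ℝ := ∑ j, (2 * h z j) • fderiv ℝ (fun w => h w j) z with hS2def
    set S3 : E n →L[ℝ] ℝ :=
      ∑ i' ∈ J, (2 * z i') • (EuclideanSpace.proj i' : E n →L[ℝ] ℝ) with hS3def
    set SQ : E n →L[ℝ] ℝ :=
      ∑ i', (2 * (z i' - xs i')) • (EuclideanSpace.proj i' : E n →L[ℝ] ℝ) with hSQdef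
    have hS1 : HasFDerivAt (fun w : E n => ∑ i', max (g w i') 0 ^ 2) S1 z :=
      HasFDerivAt.fun_sum fun i' _ =>
        by exact (hasDerivAt_maxsq (g z i')).comp_hasFDerivAt z (hgd i')
    have hS2 : HasFDerivAt (fun w : E n => ∑ j, (h w j) ^ 2) S2 z := by
      refine HasFDerivAt.fun_sum fun j _ => ?_
      have hd : HasDerivAt (fun s : ℝ => s ^ 2) (2 * h z j) (h z j) := by
        simpa using hasDerivAt_pow 2 (h z j)
      exact hd.comp_hasFDerivAt z (hhd j)
    have hS3 : HasFDerivAt (fun w : E n => ∑ i' ∈ J, (w i') ^ 2) S3 z := by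
      refine HasFDerivAt.fun_sum fun i' _ => ?_
      have hd : HasDerivAt (fun s : ℝ => s ^ 2) (2 * z i') (z i') := by
        simpa using hasDerivAt_pow 2 (z i')
      exact hd.comp_hasFDerivAt z (EuclideanSpace.proj i' : E n →L[ℝ] ℝ).hasFDerivAt
    have hSQ : HasFDerivAt Q SQ z := by
      refine HasFDerivAt.fun_sum fun i' _ => ?_
      have hd : HasDerivAt (fun s : ℝ => (s - xs i') ^ 2) (2 * (z i' - xs i')) (z i') := by
        have h1 : HasDerivAt (fun s : ℝ => s - xs i') 1 (z i') :=
          (hasDerivAt_id _).sub_const _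
        simpa using h1.fun_pow 2
      exact hd.comp_hasFDerivAt z (EuclideanSpace.proj i' : E n →L[ℝ] ℝ).hasFDerivAt
    have hP : HasFDerivAt P (S1 + S2 + S3) z := (hS1.add hS2).add hS3
    have hρP : HasFDerivAt (fun w => ρ k * P w) (ρ k • (S1 + S2 + S3)) z :=
      hP.const_mul (ρ k)
    have hFd : HasFDerivAt (F k) (fderiv ℝ f z + ρ k • (S1 + S2 + S3) + SQ) z :=
      (hfd.add hρP).add hSQ
    have hloc : IsLocalMin (F k) z :=
      (hxmin k).isLocalMin
        (mem_of_superset (Metric.isOpen_ball.mem_nhds hk) Metric.ball_subset_closedBall)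
    have hD0 : fderiv ℝ f z + ρ k • (S1 + S2 + S3) + SQ = 0 :=
      hloc.hasFDerivAt_eq_zero hFd
    have happ := DFunLike.congr_fun hD0 (EuclideanSpace.single i (1 : ℝ))
    simp only [hS1def, hS2def, hS3def, hSQdef, ContinuousLinearMap.add_apply,
      ContinuousLinearMap.coe_smul', Pi.smul_apply, ContinuousLinearMap.coe_sum',
      Finset.sum_apply, ContinuousLinearMap.smul_apply, smul_eq_mul,
      ContinuousLinearMap.zero_apply, PiLp.proj_apply,
      EuclideanSpace.single_apply, mul_ite, mul_one, mul_zero, Finset.sum_ite_eq, Finset.sum_ite_eq'] at happ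
    -- expand the goal
    have hgl : gradLx f g h z (lg k) (lh k) i =
        fderiv ℝ f z (EuclideanSpace.single i 1)
          + ∑ i', lg k i' * fderiv ℝ (fun w => g w i') z (EuclideanSpace.single i 1)
          + ∑ j, lh k j * fderiv ℝ (fun w => h w j) z (EuclideanSpace.single i 1) := by
      have h1 : gradLx f g h z (lg k) (lh k) i =
          EuclideanSpace.proj i (gradLx f g h z (lg k) (lh k)) := rfl
      rw [h1, gradLx]
      simp only [map_add, map_sum, map_smul, smul_eq_mul, PiLp.proj_apply, hgradapp]
    rw [hgl, hlgdef, hlhdef]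
    have e1 : ∑ i', (ρ k * (2 * max (g z i') 0)) *
        fderiv ℝ (fun w => g w i') z (EuclideanSpace.single i 1) =
        ρ k * ∑ i', (2 * max (g z i') 0) *
          fderiv ℝ (fun w => g w i') z (EuclideanSpace.single i 1) := by
      rw [Finset.mul_sum]
      exact Finset.sum_congr rfl fun i' _ => by ring
    have e2 : ∑ j, (ρ k * (2 * h z j)) *
        fderiv ℝ (fun w => h w j) z (EuclideanSpace.single i 1) =
        ρ k * ∑ j, (2 * h z j) *
          fderiv ℝ (fun w => h w j) z (EuclideanSpace.single i 1) := by
      rw [Finset.mul_sum]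
      exact Finset.sum_congr rfl fun j _ => by ring
    simp only []
    rw [e1, e2]
    by_cases hiJ : i ∈ J
    · simp only [if_pos hiJ, Finset.mem_univ, if_true, mul_add, mul_zero, add_zero] at happ ⊢
      linarith [happ]
    · simp only [if_neg hiJ, Finset.mem_univ, if_true, mul_add, mul_zero, add_zero] at happ ⊢
      linarith [happ]
  -- eventual interiority already used; now conclude
  have hev : ∀ᶠ k in atTop, x k ∈ Metric.ball xs r :=
    hxtend (Metric.isOpen_ball.mem_nhds (Metric.mem_ball_self hr))
  refine ⟨x, lg, lh, hlg0, hxtend, ?_, ?_⟩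
  · intro i
    have hid : ∀ k, min (-(g (x k) i)) (lg k i) = -(max (g (x k) i) 0) := by
      intro k
      rcases le_total (g (x k) i) 0 with hle | hge
      · have hl : lg k i = 0 := by simp [hlgdef, max_eq_right hle]
        rw [hl, max_eq_right hle, min_eq_right (neg_nonneg.2 hle), neg_zero]
      · have hm : max (g (x k) i) 0 = g (x k) i := max_eq_left hge
        have hl : lg k i = ρ k * (2 * g (x k) i) := by rw [hlgdef]; simp [hm]
        rw [hl, hm]
        refine min_eq_left (le_trans (neg_nonpos.2 hge) ?_)
        exact mul_nonneg (hρpos k).le (by linarith)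
    have hcm : Tendsto (fun k => -(max (g (x k) i) 0)) atTop (𝓝 (-(max (g xs i) 0))) :=
      ((((hg i).continuous.max continuous_const).tendsto xs).comp hxtend).neg
    rw [max_eq_right (hgxs i), neg_zero] at hcm
    simpa only [hid] using hcm
  · intro i
    have hxi : Tendsto (fun k => x k i) atTop (𝓝 (xs i)) :=
      ((hcoord i).tendsto xs).comp hxtend
    by_cases hiJ : i ∈ J
    · refine squeeze_zero (fun k => le_min (abs_nonneg _) (abs_nonneg _))
        (fun k => min_le_left _ _) ?_
      have h1 := hxi.abs
      rw [hJxs i hiJ, abs_zero] at h1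
      exact h1
    · refine squeeze_zero' (g := fun k => |2 * (x k i - xs i)|)
        (Eventually.of_forall fun k => le_min (abs_nonneg _) (abs_nonneg _)) ?_ ?_
      · filter_upwards [hev] with k hk
        calc min |x k i| |gradLx f g h (x k) (lg k) (lh k) i|
            ≤ |gradLx f g h (x k) (lg k) (lh k) i| := min_le_right _ _
          _ = |2 * (x k i - xs i)| := by
              rw [hstat k hk i, if_neg hiJ, zero_add, abs_neg]
      · have h2 := ((hxi.sub_const (xs i)).const_mul 2).abs
        simpa using h2

end AuxPenalty

/-- Theorem 3.8 of the paper, the main result. If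
`(x*, y*)` is a local minimizer of the relaxed MPCaC problem, then `(x*, y*)`
is an `AW`-stationary point of this problem. -/
theorem local_min_implies_AWStat {n m p : ℕ}
    (f : E n → ℝ) (g : E n → Fin m → ℝ) (h : E n → Fin p → ℝ) (α : ℕ)
    (hf : ContDiff ℝ 1 f) (hg : ∀ i, ContDiff ℝ 1 (fun x => g x i))
    (hh : ∀ j, ContDiff ℝ 1 (fun x => h x j)) (hα : 0 < α) (hαn : α < n)
    (xs ys : E n)
    (hloc : (relFeas g h α xs ys) ∧ ∃ δ > (0:ℝ), ∀ x y, relFeas g h α x y →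
      ‖(x, y) - (xs, ys)‖ ≤ δ → f xs ≤ f x) :
    AWStat f g h α xs ys := by
  obtain ⟨⟨hg0, hh0, hθ, hxy, hybd⟩, δ, hδ, hlocmin⟩ := hloc
  set J : Finset (Fin n) := Finset.univ.filter (fun i => ys i ≠ 0) with hJdef
  have hJxs : ∀ i ∈ J, xs i = 0 := by
    intro i hi
    have hyne : ys i ≠ 0 := (Finset.mem_filter.1 hi).2
    rcases mul_eq_zero.1 (hxy i) with h1 | h1
    · exact h1
    · exact absurd h1 hyne
  have hmin : ∀ x : E n, (∀ i, g x i ≤ 0) → (∀ j, h x j = 0) → (∀ i ∈ J, x i = 0) →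
      ‖x - xs‖ ≤ δ → f xs ≤ f x := by
    intro x hxg hxh hxJ hxn
    refine hlocmin x ys ⟨hxg, hxh, hθ, ?_, hybd⟩ ?_
    · intro i
      by_cases hy : ys i = 0
      · simp [hy]
      · have hi : i ∈ J := Finset.mem_filter.2 ⟨Finset.mem_univ i, hy⟩
        simp [hxJ i hi]
    · have he : (x, ys) - (xs, ys) = (x - xs, (0 : E n)) := by
        ext <;> simp
      rw [he, Prod.norm_def]
      simpa [norm_zero, max_eq_left (norm_nonneg (x - xs))] using hxn
  obtain ⟨x, lgs, lhs, hlg0, hxt, hming, hminG⟩ :=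
    akkt f g h hf hg hh J xs δ hδ hg0 hh0 hJxs hmin
  refine ⟨x, fun _ => ys, lgs, lhs, fun _ => 0,
    fun k => -(gradLx f g h (x k) (lgs k) (lhs k)), fun _ _ => 0, fun _ _ => 0,
    hlg0, fun _ => le_rfl, fun _ _ => le_rfl, hxt, tendsto_const_nhds, ?_, ?_,
    hming, ?_, ?_, ?_, ?_⟩
  · simp only [add_neg_cancel]
    exact tendsto_const_nhds
  · have he : (fun (_ : ℕ) (_ : Fin n) => -(0:ℝ) - 0 + 0) = fun _ => (0 : Fin n → ℝ) := by
      funext k i; simp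
    rw [he]
    exact tendsto_const_nhds
  · have he : min (-(theta α ys)) (0:ℝ) = 0 := min_eq_right (neg_nonneg.2 hθ)
    simp only [he]
    exact tendsto_const_nhds
  · intro i
    have he : ∀ k, |(-(gradLx f g h (x k) (lgs k) (lhs k)) : E n) i| =
        |gradLx f g h (x k) (lgs k) (lhs k) i| := fun k => by
      rw [show (-(gradLx f g h (x k) (lgs k) (lhs k)) : E n) i =
        -(gradLx f g h (x k) (lgs k) (lhs k) i) from rfl, abs_neg]
    simp only [he]
    exact hminG i
  · intro i
    have he : min (ys i) |(0:ℝ)| = 0 := by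
      rw [abs_zero]
      exact min_eq_right (hybd i).1
    simp only [he]
    exact tendsto_const_nhds
  · intro i
    have he : min (1 - ys i) (0:ℝ) = 0 := min_eq_right (by linarith [(hybd i).2])
    simp only [he]
    exact tendsto_const_nhds
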